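/- Let C and D be nonempty closed convex subsets of ℝ with C ≠ {0}, D ≠ {0}, and suppose that P_C + P_D is a projector onto a closed convex subset of ℝ. Then exactly one of the following holds: (i) both C and D are singletons; or (ii) neither C nor D is a singleton and C ∩ D = {0}. -/

import Mathlib

/-- `P` is the metric projection (nearest-point map) onto `C ⊆ ℝ`. -/
def IsProjOnR (C : Set ℝ) (P : ℝ → ℝ) : Prop :=
  ∀ x, P x ∈ C ∧ ∀ y ∈ C, ‖x - P x‖ ≤ ‖x - y‖

namespace Proof17

lemma mem_self {C : Set ℝ} {P : ℝ → ℝ} (h : IsProjOnR C P) (x : ℝ) : P x ∈ C := (h x).1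

lemma fix {C : Set ℝ} {P : ℝ → ℝ} (h : IsProjOnR C P) {x : ℝ} (hx : x ∈ C) : P x = x := by
  have h1 := (h x).2 x hx
  simp only [sub_self, norm_zero] at h1
  have h2 : ‖x - P x‖ = 0 := le_antisymm h1 (norm_nonneg _)
  have h3 : x - P x = 0 := norm_eq_zero.mp h2
  linarith

lemma vi {C : Set ℝ} {P : ℝ → ℝ} (hcv : Convex ℝ C) (h : IsProjOnR C P) (x : ℝ)
    {y : ℝ} (hy : y ∈ C) : (x - P x) * (y - P x) ≤ 0 := by
  by_contra hlt
  push_neg at hlt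
  have hyne : y - P x ≠ 0 := by
    intro h0
    rw [h0, mul_zero] at hlt
    exact lt_irrefl _ hlt
  have hsq : 0 < (y - P x) ^ 2 := by positivity
  set ε := (x - P x) * (y - P x) with hε
  set t := min 1 (ε / (y - P x) ^ 2) with ht
  have ht0 : 0 < t := lt_min one_pos (div_pos hlt hsq)
  have ht1 : t ≤ 1 := min_le_left _ _
  have hw : (1 - t) * P x + t * y ∈ C := by
    simpa [smul_eq_mul] using hcv (mem_self h x) hy (by linarith) ht0.le (by ring)
  have hle := (h x).2 _ hw
  rw [Real.norm_eq_abs, Real.norm_eq_abs] at hle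
  have hsqle := pow_le_pow_left₀ (abs_nonneg _) hle 2
  rw [sq_abs, sq_abs] at hsqle
  have hkey : t * (y - P x) ^ 2 ≤ ε := by
    have h2 : t ≤ ε / (y - P x) ^ 2 := min_le_right _ _
    exact (le_div_iff₀ hsq).mp h2
  nlinarith [mul_pos ht0 hlt, mul_le_mul_of_nonneg_left hkey ht0.le]

lemma firmly {C : Set ℝ} {P : ℝ → ℝ} (hcv : Convex ℝ C) (h : IsProjOnR C P) (x y : ℝ) :
    (P x - P y) ^ 2 ≤ (x - y) * (P x - P y) := by
  have h1 := vi hcv h x (mem_self h y)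
  have h2 := vi hcv h y (mem_self h x)
  nlinarith

lemma mono {C : Set ℝ} {P : ℝ → ℝ} (hcv : Convex ℝ C) (h : IsProjOnR C P) {x y : ℝ}
    (hxy : x ≤ y) : P x ≤ P y := by
  by_contra hlt
  push_neg at hlt
  have := firmly hcv h x y
  nlinarith

lemma swap_proj {Pc Pd : ℝ → ℝ} {E : Set ℝ} (h : IsProjOnR E (fun x => Pc x + Pd x)) :
    IsProjOnR E (fun x => Pd x + Pc x) := by
  intro x
  have hx := h x
  simp only at hx ⊢
  rw [add_comm (Pd x) (Pc x)]
  exact hx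

lemma two_points {D : Set ℝ} (hne : D.Nonempty) (h1 : ¬ ∃ d, D = {d}) :
    ∃ a ∈ D, ∃ b ∈ D, a < b := by
  obtain ⟨d, hd⟩ := hne
  by_contra h
  push_neg at h
  exact h1 ⟨d, Set.eq_singleton_iff_unique_mem.mpr
    ⟨hd, fun x hx => le_antisymm (h d hd x hx) (h x hx d hd)⟩⟩

/-- If `C = {c}` with `c ≠ 0` and `D` has two points, the sum is not a projector. -/
lemma mixed {C D : Set ℝ} {Pc Pd : ℝ → ℝ} {E : Set ℝ}
    (hDcv : Convex ℝ D)
    (hPc : IsProjOnR C Pc) (hPd : IsProjOnR D Pd)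
    (hproj : IsProjOnR E (fun x => Pc x + Pd x))
    {c : ℝ} (hc : C = {c}) (hc0 : c ≠ 0)
    {a b : ℝ} (ha : a ∈ D) (hb : b ∈ D) (hab : a < b) : False := by
  have hPcc : ∀ x, Pc x = c := by
    intro x
    have := (hPc x).1
    rwa [hc, Set.mem_singleton_iff] at this
  have idem : ∀ x, Pd (c + Pd x) = Pd x := by
    intro x
    have h1 := fix hproj (mem_self hproj x)
    rw [hPcc, hPcc] at h1
    linarith
  rcases lt_or_gt_of_ne hc0 with hneg | hpos
  · -- c < 0, use b
    have hb' : Pd (c + b) = b := by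
      have := idem b
      rwa [fix hPd hb] at this
    have hmD : max (c + b) a ∈ D :=
      hDcv.ordConnected.out ha hb ⟨le_max_right _ _, max_le (by linarith) hab.le⟩
    have hmb : max (c + b) a < b := max_lt (by linarith) hab
    have hineq := (hPd (c + b)).2 _ hmD
    rw [hb', Real.norm_eq_abs, Real.norm_eq_abs] at hineq
    rw [abs_of_neg (by linarith : c + b - b < 0),
      abs_of_nonpos (by simp [le_max_left] : c + b - max (c + b) a ≤ 0)] at hineq
    linarith
  · -- c > 0, use a
    have ha' : Pd (c + a) = a := by
      have := idem a
      rwa [fix hPd ha] at this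
    have hmD : min (c + a) b ∈ D :=
      hDcv.ordConnected.out ha hb ⟨le_min (by linarith) hab.le, min_le_right _ _⟩
    have hma : a < min (c + a) b := lt_min (by linarith) hab
    have hineq := (hPd (c + a)).2 _ hmD
    rw [ha', Real.norm_eq_abs, Real.norm_eq_abs] at hineq
    rw [abs_of_pos (by linarith : (0:ℝ) < c + a - a),
      abs_of_nonneg (by simp [min_le_left] : 0 ≤ c + a - min (c + a) b)] at hineq
    linarith

/-- If `C` has two points and the sum is a projector, then `Pd` vanishes on `C`. -/
lemma pd_zero_on {C D : Set ℝ} {Pc Pd : ℝ → ℝ} {E : Set ℝ}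
    (hCcv : Convex ℝ C) (hDcv : Convex ℝ D) (hEcv : Convex ℝ E)
    (hPc : IsProjOnR C Pc) (hPd : IsProjOnR D Pd)
    (hproj : IsProjOnR E (fun x => Pc x + Pd x))
    {a₁ a₂ : ℝ} (ha₁ : a₁ ∈ C) (ha₂ : a₂ ∈ C) (hlt : a₁ < a₂) :
    ∀ x ∈ C, Pd x = 0 := by
  -- Pd is constant on C
  have key : ∀ x ∈ C, ∀ y ∈ C, x ≤ y → Pd x = Pd y := by
    intro x hx y hy hxy
    have hm : Pd x ≤ Pd y := mono hDcv hPd hxy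
    have hf := firmly hEcv hproj x y
    rw [fix hPc hx, fix hPc hy] at hf
    nlinarith
  have constA : ∀ x ∈ C, ∀ y ∈ C, Pd x = Pd y := by
    intro x hx y hy
    rcases le_total x y with h | h
    · exact key x hx y hy h
    · exact (key y hy x hx h).symm
  set q := Pd a₁ with hq
  have hTC : ∀ s ∈ C, Pc s + Pd s = s + q := by
    intro s hs
    rw [fix hPc hs, constA s hs a₁ ha₁]
  have monoT : ∀ {x y : ℝ}, x ≤ y → Pc x + Pd x ≤ Pc y + Pd y := by
    intro x y hxy
    have := mono hEcv hproj hxy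
    simpa using this
  have idem : ∀ x : ℝ, Pc (Pc x + Pd x) + Pd (Pc x + Pd x) = Pc x + Pd x := by
    intro x
    have := fix hproj (mem_self hproj x)
    simpa using this
  have hq0 : q = 0 := by
    by_contra hq0
    rcases lt_or_gt_of_ne hq0 with hneg | hpos
    · -- q < 0
      set u := max a₁ (a₂ + q) with hu
      have huC : u ∈ C :=
        hCcv.ordConnected.out ha₁ ha₂ ⟨le_max_left _ _, max_le hlt.le (by linarith)⟩
      have hua : u < a₂ := max_lt hlt (by linarith)
      have hfixq : Pc (a₂ + q) + Pd (a₂ + q) = a₂ + q := by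
        have h1 := idem a₂
        rw [hTC a₂ ha₂] at h1
        exact h1
      have h2 : a₂ + q ≤ Pc u + Pd u := by
        calc a₂ + q = Pc (a₂ + q) + Pd (a₂ + q) := hfixq.symm
        _ ≤ Pc u + Pd u := monoT (le_max_right _ _)
      rw [hTC u huC] at h2
      linarith
    · -- q > 0
      set u := min a₂ (a₁ + q) with hu
      have huC : u ∈ C :=
        hCcv.ordConnected.out ha₁ ha₂ ⟨le_min hlt.le (by linarith), min_le_left _ _⟩
      have hua : a₁ < u := lt_min hlt (by linarith)
      have hfixq : Pc (a₁ + q) + Pd (a₁ + q) = a₁ + q := by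
        have h1 := idem a₁
        rw [hTC a₁ ha₁] at h1
        exact h1
      have h2 : Pc u + Pd u ≤ a₁ + q := by
        calc Pc u + Pd u ≤ Pc (a₁ + q) + Pd (a₁ + q) := monoT (min_le_right _ _)
        _ = a₁ + q := hfixq
      rw [hTC u huC] at h2
      linarith
  intro x hx
  rw [constA x hx a₁ ha₁, ← hq, hq0]

end Proof17

theorem stmt17 (C D : Set ℝ)
    (hCne : C.Nonempty) (hCcl : IsClosed C) (hCcv : Convex ℝ C)
    (hDne : D.Nonempty) (hDcl : IsClosed D) (hDcv : Convex ℝ D)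
    (hC0 : C ≠ {0}) (hD0 : D ≠ {0})
    (Pc Pd : ℝ → ℝ) (hPc : IsProjOnR C Pc) (hPd : IsProjOnR D Pd)
    (E : Set ℝ) (hEne : E.Nonempty) (hEcl : IsClosed E) (hEcv : Convex ℝ E)
    (hproj : IsProjOnR E (fun x => Pc x + Pd x)) :
    Xor' ((∃ c : ℝ, C = {c}) ∧ (∃ d : ℝ, D = {d}))
      ((¬ ∃ c : ℝ, C = {c}) ∧ (¬ ∃ d : ℝ, D = {d}) ∧ C ∩ D = {0}) := by
  by_cases hC1 : ∃ c : ℝ, C = {c}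
  · by_cases hD1 : ∃ d : ℝ, D = {d}
    · exact Or.inl ⟨⟨hC1, hD1⟩, fun h => h.1 hC1⟩
    · -- C singleton, D not: contradiction
      exfalso
      obtain ⟨c, hc⟩ := hC1
      have hc0 : c ≠ 0 := by
        rintro rfl
        exact hC0 hc
      obtain ⟨a, ha, b, hb, hab⟩ := Proof17.two_points hDne hD1
      exact Proof17.mixed hDcv hPc hPd hproj hc hc0 ha hb hab
  · by_cases hD1 : ∃ d : ℝ, D = {d}
    · -- D singleton, C not: contradiction
      exfalso
      obtain ⟨d, hd⟩ := hD1
      have hd0 : d ≠ 0 := by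
        rintro rfl
        exact hD0 hd
      obtain ⟨a, ha, b, hb, hab⟩ := Proof17.two_points hCne hC1
      exact Proof17.mixed hCcv hPd hPc (Proof17.swap_proj hproj) hd hd0 ha hb hab
    · -- neither singleton
      obtain ⟨a₁, ha₁, a₂, ha₂, hlta⟩ := Proof17.two_points hCne hC1
      obtain ⟨d₁, hd₁, d₂, hd₂, hltd⟩ := Proof17.two_points hDne hD1
      have hPdC : ∀ x ∈ C, Pd x = 0 :=
        Proof17.pd_zero_on hCcv hDcv hEcv hPc hPd hproj ha₁ ha₂ hlta
      have hPcD : ∀ x ∈ D, Pc x = 0 :=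
        Proof17.pd_zero_on hDcv hCcv hEcv hPd hPc (Proof17.swap_proj hproj) hd₁ hd₂ hltd
      have h0D : (0:ℝ) ∈ D := by
        have := Proof17.mem_self hPd a₁
        rwa [hPdC a₁ ha₁] at this
      have h0C : (0:ℝ) ∈ C := by
        have := Proof17.mem_self hPc d₁
        rwa [hPcD d₁ hd₁] at this
      have hCD : C ∩ D = {0} := by
        apply Set.eq_singleton_iff_unique_mem.mpr
        refine ⟨⟨h0C, h0D⟩, fun x hx => ?_⟩
        have hxC := hx.1
        have hxD := hx.2
        have hT0 : Pc 0 + Pd 0 = 0 := by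
          rw [Proof17.fix hPc h0C, hPdC 0 h0C]
          ring
        have hTx : Pc x + Pd x = 2 * x := by
          rw [Proof17.fix hPc hxC, Proof17.fix hPd hxD]
          ring
        have hf := Proof17.firmly hEcv hproj x 0
        rw [hT0, hTx] at hf
        have hx2 : x ^ 2 ≤ 0 := by nlinarith
        have := le_antisymm hx2 (sq_nonneg x)
        exact (pow_eq_zero_iff two_ne_zero).mp this
      exact Or.inr ⟨⟨hC1, hD1, hCD⟩, fun h => hC1 h.1⟩
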